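/- Let A ∈ ℝ^{m×n} and let 0 ≤ k ≤ m be an integer. Then ∑_{S ⊆ {1,…,m}, |S|=k} det(A_S A_S^T) · ‖A − π_S(A)‖_F² = (k+1) · ∑_{T ⊆ {1,…,m}, |T|=k+1} det(A_T A_T^T). -/

import Mathlib

open Matrix BigOperators

noncomputable def projSpan {m n : ℕ} (A : Matrix (Fin m) (Fin n) ℝ) (S : Finset (Fin m)) :
    Matrix (Fin m) (Fin n) ℝ := fun i j =>
  (Submodule.orthogonalProjectionOnto
      (Submodule.span ℝ (Set.range (fun s : S => (WithLp.equiv 2 (Fin n → ℝ)).symm (A s))))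
      ((WithLp.equiv 2 (Fin n → ℝ)).symm (A i)) : EuclideanSpace ℝ (Fin n)) j

def rowSub {m n : ℕ} (A : Matrix (Fin m) (Fin n) ℝ) (S : Finset (Fin m)) :
    Matrix {x // x ∈ S} (Fin n) ℝ := fun i j => A i.1 j

noncomputable def gramDet {m n : ℕ} (A : Matrix (Fin m) (Fin n) ℝ) (S : Finset (Fin m)) : ℝ :=
  (rowSub A S * (rowSub A S)ᵀ).det

noncomputable def frobSq {m n : ℕ} (M : Matrix (Fin m) (Fin n) ℝ) : ℝ :=
  ∑ i, ∑ j, (M i j)^2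

noncomputable def specNorm {m n : ℕ} (M : Matrix (Fin m) (Fin n) ℝ) : ℝ :=
  ‖LinearMap.toContinuousLinearMap (Matrix.toEuclideanLin M)‖

lemma count_lemma {m : ℕ} (k : ℕ) (f : Finset (Fin m) → ℝ) :
    ∑ S ∈ Finset.powersetCard k (Finset.univ : Finset (Fin m)),
        ∑ i ∈ Sᶜ, f (insert i S)
      = ((k : ℝ) + 1) *
          ∑ T ∈ Finset.powersetCard (k + 1) (Finset.univ : Finset (Fin m)), f T := by
  have rhs : ∀ T ∈ Finset.powersetCard (k+1) (Finset.univ : Finset (Fin m)),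
      ((k:ℝ)+1) * f T = ∑ _i ∈ T, f T := by
    intro T hT
    rw [Finset.sum_const, nsmul_eq_mul, (Finset.mem_powersetCard.mp hT).2]
    push_cast; ring
  rw [Finset.mul_sum, Finset.sum_congr rfl rhs]
  rw [Finset.sum_sigma', Finset.sum_sigma']
  apply Finset.sum_nbij' (fun p => (⟨insert p.2 p.1, p.2⟩ : Σ _ : Finset (Fin m), Fin m))
    (fun p => (⟨p.1.erase p.2, p.2⟩ : Σ _ : Finset (Fin m), Fin m))
  · rintro ⟨S, i⟩ h
    simp only [Finset.mem_sigma, Finset.mem_powersetCard_univ, Finset.mem_compl] at h ⊢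
    refine ⟨?_, Finset.mem_insert_self _ _⟩
    rw [Finset.card_insert_of_notMem h.2, h.1]
  · rintro ⟨T, i⟩ h
    simp only [Finset.mem_sigma, Finset.mem_powersetCard_univ, Finset.mem_compl] at h ⊢
    refine ⟨?_, Finset.notMem_erase _ _⟩
    rw [Finset.card_erase_of_mem h.2, h.1]; omega
  · rintro ⟨S, i⟩ h
    simp only [Finset.mem_sigma, Finset.mem_powersetCard_univ, Finset.mem_compl] at h
    simp [Finset.erase_insert h.2]
  · rintro ⟨T, i⟩ h
    simp only [Finset.mem_sigma, Finset.mem_powersetCard_univ, Finset.mem_compl] at h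
    simp [Finset.insert_erase h.2]
  · rintro ⟨S, i⟩ h; rfl


namespace GramAux
variable (A : Matrix (Fin m) (Fin n) ℝ) (S : Finset (Fin m))

noncomputable def vr (i : Fin m) : EuclideanSpace ℝ (Fin n) :=
  (WithLp.equiv 2 (Fin n → ℝ)).symm (A i)

noncomputable def K : Submodule ℝ (EuclideanSpace ℝ (Fin n)) :=
  Submodule.span ℝ (Set.range (fun s : S => vr A s))

noncomputable def pp (i : Fin m) : EuclideanSpace ℝ (Fin n) :=
  (Submodule.orthogonalProjectionOnto (K A S) (vr A i) : EuclideanSpace ℝ (Fin n))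

lemma projSpan_eq (i : Fin m) (j : Fin n) : projSpan A S i j = pp A S i j := rfl

lemma vr_mem (i : Fin m) (hi : i ∈ S) : vr A i ∈ K A S :=
  Submodule.subset_span ⟨⟨i, hi⟩, rfl⟩

lemma pp_of_mem (i : Fin m) (hi : i ∈ S) : pp A S i = vr A i :=
  Submodule.starProjection_eq_self_iff.mpr (vr_mem A S i hi)

lemma frob_eq : frobSq (A - projSpan A S) = ∑ i ∈ Sᶜ, ‖vr A i - pp A S i‖^2 := by
  have h1 : ∀ i : Fin m, ∑ j, ((A - projSpan A S) i j)^2 = ‖vr A i - pp A S i‖^2 := by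
    intro i
    rw [← real_inner_self_eq_norm_sq]
    rw [PiLp.inner_apply]
    apply Finset.sum_congr rfl
    intro j _
    simp only [Matrix.sub_apply, projSpan_eq, RCLike.inner_apply, conj_trivial]
    have : (vr A i - pp A S i) j = A i j - pp A S i j := rfl
    rw [this]; ring
  rw [frobSq, Finset.sum_congr rfl (fun i _ => h1 i)]
  rw [← Finset.sum_compl_add_sum S]
  have h2 : ∑ i ∈ S, ‖vr A i - pp A S i‖^2 = 0 := by
    apply Finset.sum_eq_zero
    intro i hi
    rw [pp_of_mem A S i hi]; simp
  rw [h2, add_zero]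


def ins (i : Fin m) (hi : i ∉ S) : (Unit ⊕ {x // x ∈ S}) ≃ {x // x ∈ insert i S} where
  toFun := Sum.elim (fun _ => ⟨i, Finset.mem_insert_self i S⟩)
    (fun j => ⟨j.1, Finset.mem_insert_of_mem j.2⟩)
  invFun := fun x => if h : x.1 ∈ S then Sum.inr ⟨x.1, h⟩ else Sum.inl ()
  left_inv := by
    rintro (u | j)
    · simp [hi]
    · simp [j.2]
  right_inv := by
    rintro ⟨x, hx⟩
    rcases Finset.mem_insert.mp hx with h | h
    · subst h; simp [hi]
    · simp [h]

lemma gram_entry (T : Finset (Fin m)) (x y : {z // z ∈ T}) :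
    (rowSub A T * (rowSub A T)ᵀ) x y = (inner ℝ (vr A x.1) (vr A y.1) : ℝ) := by
  simp [Matrix.mul_apply, rowSub, PiLp.inner_apply, RCLike.inner_apply, vr,
    WithLp.equiv_symm_apply, PiLp.toLp_apply, mul_comm]

lemma key (i : Fin m) (hi : i ∉ S) :
    gramDet A (insert i S) = gramDet A S * ‖vr A i - pp A S i‖^2 := by
  classical
  set r : EuclideanSpace ℝ (Fin n) := vr A i - pp A S i with hr_def
  -- orthogonality of r to the span
  have hrK : r ∈ (K A S)ᗮ := Submodule.sub_starProjection_mem_orthogonal _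
  have hro : ∀ u ∈ K A S, (inner ℝ r (u) : ℝ) = 0 := fun u hu =>
    (Submodule.mem_orthogonal' _ _).mp hrK u hu
  have hpK : pp A S i ∈ K A S := (Submodule.orthogonalProjectionOnto (K A S) (vr A i)).2
  obtain ⟨c, hc⟩ := (Submodule.mem_span_range_iff_exists_fun ℝ).mp hpK
  set p : EuclideanSpace ℝ (Fin n) := pp A S i with hp_def
  set e := ins S i hi with he
  set T := rowSub A S * (rowSub A S)ᵀ with hT
  set cB : Matrix Unit {x // x ∈ S} ℝ := Matrix.of fun _ j => c j with hcB
  set R : Matrix Unit Unit ℝ := Matrix.of fun _ _ => ‖r‖^2 with hRR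
  set F : Matrix (Unit ⊕ {x // x ∈ S}) (Unit ⊕ {x // x ∈ S}) ℝ :=
    Matrix.fromBlocks 1 cB 0 1 with hF
  set G : Matrix (Unit ⊕ {x // x ∈ S}) (Unit ⊕ {x // x ∈ S}) ℝ :=
    Matrix.fromBlocks R 0 0 T with hG
  have hvm : ∀ j : {x // x ∈ S}, vr A j.1 ∈ K A S := fun j =>
    Submodule.subset_span ⟨j, rfl⟩
  have hvi : vr A i = r + p := by rw [hr_def]; abel
  have hprod : F * G * Fᵀ = Matrix.fromBlocks (R + cB * T * cBᵀ) (cB * T) (T * cBᵀ) T := by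
    rw [hF, hG, Matrix.fromBlocks_transpose, Matrix.fromBlocks_multiply,
      Matrix.fromBlocks_multiply]
    congr 1 <;> simp [Matrix.transpose_one]
  have hcT : ∀ l : {x // x ∈ S}, (cB * T) () l = (inner ℝ p (vr A l.1) : ℝ) := by
    intro l
    rw [← hc, sum_inner, Matrix.mul_apply]
    apply Finset.sum_congr rfl
    intro j _
    rw [real_inner_smul_left, hT, gram_entry]
    simp [hcB]
  have hTc : ∀ l : {x // x ∈ S}, (T * cBᵀ) l () = (inner ℝ (vr A l.1) p : ℝ) := by
    intro l
    rw [← hc, inner_sum, Matrix.mul_apply]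
    apply Finset.sum_congr rfl
    intro j _
    rw [real_inner_smul_right, hT, gram_entry]
    simp [hcB, mul_comm]
  have hrp : (inner ℝ r p : ℝ) = 0 := hro p hpK
  have hpp : (cB * T * cBᵀ) () () = (inner ℝ p p : ℝ) := by
    rw [Matrix.mul_apply]
    have step : ∀ l : {x // x ∈ S}, (cB * T) () l * cBᵀ l () =
        (inner ℝ p (c l • vr A l.1) : ℝ) := by
      intro l
      rw [hcT l, real_inner_smul_right]
      simp [hcB]
      ring
    rw [Finset.sum_congr rfl (fun l _ => step l), ← inner_sum, hc]
  have hsub : (rowSub A (insert i S) * (rowSub A (insert i S))ᵀ).submatrix e e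
      = F * G * Fᵀ := by
    rw [hprod]
    ext x y
    rcases x with ⟨⟩ | j <;> rcases y with ⟨⟩ | l
    · have h1 : (e (Sum.inl ())).1 = i := rfl
      simp only [Matrix.submatrix_apply, gram_entry, h1, Matrix.fromBlocks_apply₁₁]
      rw [hvi, real_inner_add_add_self, hrp, real_inner_self_eq_norm_sq, ← hpp]
      simp [Matrix.add_apply, hRR]
    · have h1 : (e (Sum.inl ())).1 = i := rfl
      have h2 : (e (Sum.inr l)).1 = l.1 := rfl
      simp only [Matrix.submatrix_apply, gram_entry, h1, h2, Matrix.fromBlocks_apply₁₂]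
      rw [hvi, inner_add_left, hro (vr A l.1) (hvm l), zero_add, hcT l]
    · have h1 : (e (Sum.inl ())).1 = i := rfl
      have h2 : (e (Sum.inr j)).1 = j.1 := rfl
      simp only [Matrix.submatrix_apply, gram_entry, h1, h2, Matrix.fromBlocks_apply₂₁]
      have h0 : (inner ℝ (vr A j.1) r : ℝ) = 0 := by
        rw [real_inner_comm]; exact hro _ (hvm j)
      rw [hvi, inner_add_right, h0, zero_add]
      exact (hTc j).symm
    · have h2 : (e (Sum.inr j)).1 = j.1 := rfl
      have h3 : (e (Sum.inr l)).1 = l.1 := rfl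
      simp only [Matrix.submatrix_apply, gram_entry, h2, h3, Matrix.fromBlocks_apply₂₂]
      rw [hT, gram_entry]
  have hdet : gramDet A (insert i S) = (F * G * Fᵀ).det := by
    rw [gramDet, ← Matrix.det_submatrix_equiv_self e, hsub]
  rw [hdet, Matrix.det_mul, Matrix.det_mul, Matrix.det_transpose]
  have hdF : F.det = 1 := by
    rw [hF, Matrix.det_fromBlocks_zero₂₁, Matrix.det_one, Matrix.det_one, mul_one]
  have hdG : G.det = ‖r‖^2 * T.det := by
    rw [hG, Matrix.det_fromBlocks_zero₂₁]
    congr 1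
    rw [Matrix.det_unique]
    rfl
  rw [hdF, hdG, gramDet, ← hT]
  ring

end GramAux


/-- ∑_{|S|=k} det(A_S A_Sᵀ)·‖A − π_S(A)‖_F² = (k+1)·∑_{|T|=k+1} det(A_T A_Tᵀ). -/
theorem sum_det_frob_univ {m n : ℕ} (A : Matrix (Fin m) (Fin n) ℝ) (k : ℕ) (hk : k ≤ m) :
    ∑ S ∈ Finset.powersetCard k (Finset.univ : Finset (Fin m)),
        gramDet A S * frobSq (A - projSpan A S)
      = ((k : ℝ) + 1) *
          ∑ T ∈ Finset.powersetCard (k + 1) (Finset.univ : Finset (Fin m)), gramDet A T := by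
  have step1 : ∀ S ∈ Finset.powersetCard k (Finset.univ : Finset (Fin m)),
      gramDet A S * frobSq (A - projSpan A S)
        = ∑ i ∈ Sᶜ, gramDet A (insert i S) := by
    intro S _
    rw [GramAux.frob_eq, Finset.mul_sum]
    apply Finset.sum_congr rfl
    intro i hi
    rw [GramAux.key A S i (Finset.mem_compl.mp hi)]
  rw [Finset.sum_congr rfl step1]
  exact count_lemma k (gramDet A)
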